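/- arXiv:1706.07010 — 2 statements merged into one kernel-verified Lean document; each statement's English description precedes it below -/
import Mathlib

section
/- Let D, H > 0 with D ≤ 2H/√3, and define ψ(x) = 1/((x + D/2)² + H²) + 1/((x - D/2)² + H²). Then ψ attains its unique global maximum over the interval [-D/2, D/2] at x = 0; moreover ψ is strictly increasing on [-D/2, 0] and strictly decreasing on [0, D/2]. -/
lemma psi_key (a b H : ℝ) (ha : 0 < a) (hab : a < b) (h : 3*(a+b)^2 ≤ 4*H^2) :
    a*(b^2+H^2)^2 < b*(a^2+H^2)^2 := by
  have hb : 0 < b := ha.trans hab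
  have hp : a*b < (a+b)^2/4 := by nlinarith [sq_nonneg (a-b)]
  have hq : 0 < H^2 - a*b := by nlinarith
  have hE : 0 < (H^2 - a*b)^2 - a*b*(a+b)^2 := by
    have h1 : (3*(a+b)^2/4 - a*b)^2 ≤ (H^2 - a*b)^2 := by
      have : 0 < 3*(a+b)^2/4 - a*b := by nlinarith [mul_pos ha hb]
      nlinarith
    nlinarith [mul_pos (sub_pos.2 hp) (show 0 < 9*(a+b)^2/4 - a*b by nlinarith [mul_pos ha hb])]
  nlinarith [mul_pos (sub_pos.2 hab) hE]

lemma psi_hasDeriv (D H : ℝ) (hH : 0 < H) (x : ℝ) :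
    HasDerivAt (fun x => 1 / ((x + D / 2) ^ 2 + H ^ 2) + 1 / ((x - D / 2) ^ 2 + H ^ 2))
      (-(2*(x + D/2)) / ((x + D/2)^2 + H^2)^2 + -(2*(x - D/2)) / ((x - D/2)^2 + H^2)^2) x := by
  have h1 : ((x + D/2)^2 + H^2) ≠ 0 := by positivity
  have h2 : ((x - D/2)^2 + H^2) ≠ 0 := by positivity
  have u1 : HasDerivAt (fun x : ℝ => (x + D/2)^2 + H^2) (2*(x + D/2)) x := by
    have := (((hasDerivAt_id x).add_const (D/2)).pow 2).add_const (H^2)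
    simpa [mul_comm] using this
  have u2 : HasDerivAt (fun x : ℝ => (x - D/2)^2 + H^2) (2*(x - D/2)) x := by
    have := (((hasDerivAt_id x).sub_const (D/2)).pow 2).add_const (H^2)
    simpa [mul_comm] using this
  have := (u1.inv h1).add (u2.inv h2)
  simp only [one_div, neg_div] at this ⊢
  exact this

/-- When D ≤ 2H/√3, ψ has its unique global maximum on [-D/2, D/2] at 0,
is strictly increasing on [-D/2,0] and strictly decreasing on [0,D/2]. -/
theorem psi_max_close (D H : ℝ) (hD : 0 < D) (hH : 0 < H)
    (hclose : D ≤ 2 * H / Real.sqrt 3)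
    (ψ : ℝ → ℝ)
    (hψ : ∀ x, ψ x = 1 / ((x + D / 2) ^ 2 + H ^ 2) + 1 / ((x - D / 2) ^ 2 + H ^ 2)) :
    (∀ x ∈ Set.Icc (-(D / 2)) (D / 2), x ≠ 0 → ψ x < ψ 0) ∧
    StrictMonoOn ψ (Set.Icc (-(D / 2)) 0) ∧
    StrictAntiOn ψ (Set.Icc 0 (D / 2)) := by
  have hfun : ψ = fun x => 1 / ((x + D / 2) ^ 2 + H ^ 2) + 1 / ((x - D / 2) ^ 2 + H ^ 2) :=
    funext hψ
  subst hfun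
  set ψ : ℝ → ℝ := fun x => 1 / ((x + D / 2) ^ 2 + H ^ 2) + 1 / ((x - D / 2) ^ 2 + H ^ 2)
    with hψdef
  have h3 : (0:ℝ) < Real.sqrt 3 := Real.sqrt_pos.2 (by norm_num)
  have hDs : D * Real.sqrt 3 ≤ 2 * H := (le_div_iff₀ h3).1 hclose
  have hs3 : Real.sqrt 3 ^ 2 = 3 := Real.sq_sqrt (by norm_num)
  have h34 : 3 * D^2 ≤ 4 * H^2 := by
    nlinarith [mul_nonneg (sub_nonneg.2 hDs) (by positivity : (0:ℝ) ≤ 2*H + D*Real.sqrt 3)]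
  have hderiv : ∀ x, deriv ψ x =
      -(2*(x + D/2)) / ((x + D/2)^2 + H^2)^2 + -(2*(x - D/2)) / ((x - D/2)^2 + H^2)^2 :=
    fun x => (psi_hasDeriv D H hH x).deriv
  have hcont : Continuous ψ := by
    rw [hψdef]
    apply Continuous.add <;>
    · apply Continuous.div continuous_const (by continuity)
      intro x; positivity
  have hmono : StrictMonoOn ψ (Set.Icc (-(D / 2)) 0) := by
    apply strictMonoOn_of_deriv_pos (convex_Icc _ _) hcont.continuousOn
    intro x hx
    rw [interior_Icc] at hx
    obtain ⟨hx1, hx2⟩ := hx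
    have key := psi_key (x + D/2) (D/2 - x) H (by linarith) (by linarith) (by nlinarith)
    have hA : (0:ℝ) < ((x + D/2)^2 + H^2)^2 := by positivity
    have hB : (0:ℝ) < ((x - D/2)^2 + H^2)^2 := by positivity
    rw [hderiv x, div_add_div _ _ hA.ne' hB.ne']
    apply div_pos _ (mul_pos hA hB)
    linarith [key]
  have hanti : StrictAntiOn ψ (Set.Icc 0 (D / 2)) := by
    apply strictAntiOn_of_deriv_neg (convex_Icc _ _) hcont.continuousOn
    intro x hx
    rw [interior_Icc] at hx
    obtain ⟨hx1, hx2⟩ := hx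
    have key := psi_key (D/2 - x) (x + D/2) H (by linarith) (by linarith) (by nlinarith)
    have hA : (0:ℝ) < ((x + D/2)^2 + H^2)^2 := by positivity
    have hB : (0:ℝ) < ((x - D/2)^2 + H^2)^2 := by positivity
    rw [hderiv x, div_add_div _ _ hA.ne' hB.ne']
    apply div_neg_of_neg_of_pos _ (mul_pos hA hB)
    linarith [key]
  refine ⟨?_, hmono, hanti⟩
  intro x hx hx0
  obtain ⟨hx1, hx2⟩ := hx
  rcases hx0.lt_or_gt with h | h
  · exact hmono ⟨hx1, h.le⟩ ⟨by linarith, le_refl 0⟩ h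
  · exact hanti ⟨le_refl 0, by linarith⟩ ⟨h.le, hx2⟩ h
end

section
/- Let D, H, T > 0, D ≤ 2H/√3, and let Q₁, Q₂ be as above. For any trajectory x : [0,T] → ℝ, the total delivered energy satisfies ∫₀ᵀ (Q₁(x(t)) + Q₂(x(t))) dt ≤ T·(Q₁(0) + Q₂(0)) = 2T/(D²/4 + H²), with equality if and only if x(t) = 0 for almost every t. -/
open intervalIntegral MeasureTheory

set_option maxHeartbeats 800000

lemma ptwise_le' (D H : ℝ) (hD : 0 < D) (hH : 0 < H) (h3 : 3 * D ^ 2 ≤ 4 * H ^ 2) (y : ℝ) :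
    1 / ((y + D / 2) ^ 2 + H ^ 2) + 1 / ((y - D / 2) ^ 2 + H ^ 2)
      ≤ 2 / (D ^ 2 / 4 + H ^ 2) := by
  have hA : (0:ℝ) < (y + D / 2) ^ 2 + H ^ 2 := by positivity
  have hB : (0:ℝ) < (y - D / 2) ^ 2 + H ^ 2 := by positivity
  have hC : (0:ℝ) < D ^ 2 / 4 + H ^ 2 := by positivity
  rw [div_add_div _ _ (ne_of_gt hA) (ne_of_gt hB), div_le_div_iff₀ (by positivity) hC]
  nlinarith [sq_nonneg y, mul_nonneg (sq_nonneg y) (by nlinarith : (0:ℝ) ≤ y ^ 2 + H ^ 2 - 3 * (D ^ 2 / 4))]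

lemma ptwise_eq' (D H : ℝ) (hD : 0 < D) (hH : 0 < H) (h3 : 3 * D ^ 2 ≤ 4 * H ^ 2) (y : ℝ)
    (heq : 1 / ((y + D / 2) ^ 2 + H ^ 2) + 1 / ((y - D / 2) ^ 2 + H ^ 2)
      = 2 / (D ^ 2 / 4 + H ^ 2)) : y = 0 := by
  have hA : (0:ℝ) < (y + D / 2) ^ 2 + H ^ 2 := by positivity
  have hB : (0:ℝ) < (y - D / 2) ^ 2 + H ^ 2 := by positivity
  have hC : (0:ℝ) < D ^ 2 / 4 + H ^ 2 := by positivity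
  rw [div_add_div _ _ (ne_of_gt hA) (ne_of_gt hB), div_eq_div_iff (by positivity) (ne_of_gt hC)] at heq
  by_contra hy
  have hy2 : 0 < y ^ 2 := by positivity
  nlinarith [mul_pos hy2 (by nlinarith : (0:ℝ) < y ^ 2 + H ^ 2 - 3 * (D ^ 2 / 4))]

/-- When D ≤ 2H/√3, the total delivered energy of any trajectory is at most
T·(Q₁(0)+Q₂(0)) = 2T/(D²/4+H²), with equality iff x(t) = 0 a.e. on [0,T]. -/
theorem total_energy_bound_close (D H T : ℝ) (hD : 0 < D) (hH : 0 < H) (hT : 0 < T)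
    (hclose : D ≤ 2 * H / Real.sqrt 3)
    (Q₁ Q₂ : ℝ → ℝ)
    (hQ₁ : ∀ x, Q₁ x = 1 / ((x + D / 2) ^ 2 + H ^ 2))
    (hQ₂ : ∀ x, Q₂ x = 1 / ((x - D / 2) ^ 2 + H ^ 2))
    (x : ℝ → ℝ) (hx : Measurable x) :
    (∫ t in (0 : ℝ)..T, (Q₁ (x t) + Q₂ (x t))) ≤ T * (Q₁ 0 + Q₂ 0) ∧
    T * (Q₁ 0 + Q₂ 0) = 2 * T / (D ^ 2 / 4 + H ^ 2) ∧
    ((∫ t in (0 : ℝ)..T, (Q₁ (x t) + Q₂ (x t))) = T * (Q₁ 0 + Q₂ 0) ↔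
      ∀ᵐ t ∂(volume.restrict (Set.Ioc 0 T)), x t = 0) := by
  -- derive 3D² ≤ 4H²
  have hs3 : (0:ℝ) < Real.sqrt 3 := Real.sqrt_pos.mpr (by norm_num)
  have h3 : 3 * D ^ 2 ≤ 4 * H ^ 2 := by
    have h1 : D * Real.sqrt 3 ≤ 2 * H := by
      rw [div_eq_mul_inv] at hclose
      calc D * Real.sqrt 3 ≤ (2 * H * (Real.sqrt 3)⁻¹) * Real.sqrt 3 := by
            apply mul_le_mul_of_nonneg_right hclose hs3.le
        _ = 2 * H := by field_simp
    have h2 : (D * Real.sqrt 3) ^ 2 ≤ (2 * H) ^ 2 :=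
      pow_le_pow_left₀ (by positivity) h1 2
    have hsq : Real.sqrt 3 ^ 2 = 3 := Real.sq_sqrt (by norm_num)
    nlinarith [hsq]
  have hC : (0:ℝ) < D ^ 2 / 4 + H ^ 2 := by positivity
  -- value at 0
  have hM : Q₁ 0 + Q₂ 0 = 2 / (D ^ 2 / 4 + H ^ 2) := by
    rw [hQ₁, hQ₂]
    have h1 : (0 + D / 2) ^ 2 = D ^ 2 / 4 := by ring
    have h2 : (0 - D / 2) ^ 2 = D ^ 2 / 4 := by ring
    rw [h1, h2, ← add_div]
    norm_num
  set M : ℝ := 2 / (D ^ 2 / 4 + H ^ 2) with hMdef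
  set f : ℝ → ℝ := fun t => Q₁ (x t) + Q₂ (x t) with hf
  have hfle : ∀ t, f t ≤ M := fun t => by
    rw [hf]; simp only [hQ₁, hQ₂]; exact ptwise_le' D H hD hH h3 (x t)
  have hfpos : ∀ t, 0 < f t := fun t => by
    rw [hf]; simp only [hQ₁, hQ₂]; positivity
  have hfeq : ∀ t, f t = M ↔ x t = 0 := fun t => by
    constructor
    · intro h; rw [hf] at h; simp only [hQ₁, hQ₂] at h
      exact ptwise_eq' D H hD hH h3 (x t) h
    · intro h; rw [hf]; simp only [hQ₁, hQ₂, h]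
      have h1 : (0 + D / 2) ^ 2 = D ^ 2 / 4 := by ring
      have h2 : (0 - D / 2) ^ 2 = D ^ 2 / 4 := by ring
      rw [h1, h2, ← add_div]; norm_num; exact hMdef.symm
  clear_value M f
  have hmeas : Measurable f := by
    rw [hf]
    have : (fun t => Q₁ (x t) + Q₂ (x t))
        = fun t => 1 / ((x t + D / 2) ^ 2 + H ^ 2) + 1 / ((x t - D / 2) ^ 2 + H ^ 2) := by
      funext t; rw [hQ₁, hQ₂]
    rw [this]
    apply Measurable.add
    · exact Measurable.div measurable_const
        ((((hx.add_const _).pow_const 2).add_const _))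
    · exact Measurable.div measurable_const
        ((((hx.sub_const _).pow_const 2).add_const _))
  have hInt : IntegrableOn f (Set.Ioc 0 T) volume := by
    apply Integrable.mono' (integrable_const M) hmeas.aestronglyMeasurable
    filter_upwards with t
    rw [Real.norm_eq_abs, abs_of_nonneg (hfpos t).le]
    exact hfle t
  have hIoc : (∫ t in (0:ℝ)..T, f t) = ∫ t in Set.Ioc 0 T, f t :=
    intervalIntegral.integral_of_le hT.le
  have hμT : (volume (Set.Ioc (0:ℝ) T)).toReal = T := by
    simp [Real.volume_Ioc, ENNReal.toReal_ofReal hT.le]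
  have hconstInt : ∫ _ in Set.Ioc (0:ℝ) T, M = T * M := by
    rw [setIntegral_const, measureReal_def, hμT, smul_eq_mul]
  have hIntConst : IntegrableOn (fun _ : ℝ => M) (Set.Ioc 0 T) volume := integrable_const M
  -- inequality
  have hle : (∫ t in Set.Ioc (0:ℝ) T, f t) ≤ T * M := by
    rw [← hconstInt]
    exact integral_mono hInt hIntConst hfle
  refine ⟨by rw [hM, hIoc]; exact hle, by rw [hM, hMdef]; ring, ?_⟩
  rw [hM, hIoc]
  -- equality iff
  have hsub : (∫ t in Set.Ioc (0:ℝ) T, (M - f t)) = T * M - ∫ t in Set.Ioc (0:ℝ) T, f t := by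
    rw [integral_sub hIntConst hInt, hconstInt]
  have hnn : 0 ≤ᵐ[volume.restrict (Set.Ioc (0:ℝ) T)] fun t => M - f t := by
    filter_upwards with t using sub_nonneg.mpr (hfle t)
  have hIntSub : Integrable (fun t => M - f t) (volume.restrict (Set.Ioc (0:ℝ) T)) :=
    hIntConst.sub hInt
  constructor
  · intro h
    have h0 : (∫ t in Set.Ioc (0:ℝ) T, (M - f t)) = 0 := by rw [hsub, h]; ring
    have hae : (fun t => M - f t) =ᵐ[volume.restrict (Set.Ioc (0:ℝ) T)] 0 :=
      (MeasureTheory.integral_eq_zero_iff_of_nonneg_ae hnn hIntSub).mp h0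
    filter_upwards [hae] with t ht
    have : f t = M := by
      have := sub_eq_zero.mp ht
      linarith [this]
    exact (hfeq t).mp this
  · intro h
    have h0 : (fun t => M - f t) =ᵐ[volume.restrict (Set.Ioc (0:ℝ) T)] 0 := by
      filter_upwards [h] with t ht
      have : f t = M := (hfeq t).mpr ht
      simp [this]
    have : (∫ t in Set.Ioc (0:ℝ) T, (M - f t)) = 0 := by
      rw [integral_congr_ae h0]; simp
    rw [hsub] at this; linarith
end
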